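/- arXiv:1507.08751 — 4 statements merged into one kernel-verified Lean document; each statement's English description precedes it below -/
import Mathlib

section
/- For any matrix X of rank r with reduced SVD X = U S Vᵀ (U of size m×r, V of size n×r with orthonormal columns, S positive diagonal), the matrix U Vᵀ is a subgradient of the nuclear norm at X; that is, for every matrix Z, ‖Z‖_* ≥ ‖X‖_* + ⟨U Vᵀ, Z − X⟩, where ⟨·,·⟩ is the trace (Frobenius) inner product. -/
noncomputable section
open Matrix BigOperators

/-- Frobenius (trace) inner product of two real matrices. -/
def frobInner {m n : ℕ} (A B : Matrix (Fin m) (Fin n) ℝ) : ℝ := (Aᵀ * B).trace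

/-- Singular values of a real matrix: square roots of the eigenvalues of `Xᴴ * X`. -/
def singularValues {m n : ℕ} (X : Matrix (Fin m) (Fin n) ℝ) : Fin n → ℝ :=
  fun i => Real.sqrt ((Matrix.isHermitian_conjTranspose_mul_self X).eigenvalues i)

/-- Nuclear norm: sum of singular values. -/
def nuclearNorm {m n : ℕ} (X : Matrix (Fin m) (Fin n) ℝ) : ℝ := ∑ i, singularValues X i

/-- Operator norm: largest singular value. -/
def opNorm {m n : ℕ} (X : Matrix (Fin m) (Fin n) ℝ) : ℝ := ⨆ i, singularValues X i

namespace NucAux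

lemma dot_self_nonneg {k : ℕ} (v : Fin k → ℝ) : 0 ≤ v ⬝ᵥ v :=
  Finset.sum_nonneg fun i _ => mul_self_nonneg _

lemma adjoint_dot {p q : ℕ} (A : Matrix (Fin p) (Fin q) ℝ) (y : Fin q → ℝ) (x : Fin p → ℝ) :
    (A *ᵥ y) ⬝ᵥ x = y ⬝ᵥ (Aᵀ *ᵥ x) := by
  rw [dotProduct_comm, Matrix.dotProduct_mulVec, ← Matrix.mulVec_transpose,
    dotProduct_comm]

lemma dot_sq_le {k : ℕ} (v w : Fin k → ℝ) : (v ⬝ᵥ w) ^ 2 ≤ (v ⬝ᵥ v) * (w ⬝ᵥ w) := by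
  have h := Finset.sum_mul_sq_le_sq_mul_sq Finset.univ v w
  simpa [dotProduct, sq] using h

lemma dot_le_sqrt {k : ℕ} (v w : Fin k → ℝ) :
    v ⬝ᵥ w ≤ Real.sqrt (v ⬝ᵥ v) * Real.sqrt (w ⬝ᵥ w) := by
  calc v ⬝ᵥ w ≤ |v ⬝ᵥ w| := le_abs_self _
    _ = Real.sqrt ((v ⬝ᵥ w) ^ 2) := (Real.sqrt_sq_eq_abs _).symm
    _ ≤ Real.sqrt ((v ⬝ᵥ v) * (w ⬝ᵥ w)) := Real.sqrt_le_sqrt (dot_sq_le v w)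
    _ = Real.sqrt (v ⬝ᵥ v) * Real.sqrt (w ⬝ᵥ w) := Real.sqrt_mul (dot_self_nonneg v) _

lemma contraction {n r : ℕ} (V : Matrix (Fin n) (Fin r) ℝ)
    (h : ∀ y : Fin r → ℝ, (V *ᵥ y) ⬝ᵥ (V *ᵥ y) ≤ y ⬝ᵥ y) (w : Fin n → ℝ) :
    (Vᵀ *ᵥ w) ⬝ᵥ (Vᵀ *ᵥ w) ≤ w ⬝ᵥ w := by
  set y := Vᵀ *ᵥ w with hy
  have hyw : y ⬝ᵥ y = (V *ᵥ y) ⬝ᵥ w := (adjoint_dot V y w).symm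
  have hcs : ((V *ᵥ y) ⬝ᵥ w) ^ 2 ≤ ((V *ᵥ y) ⬝ᵥ (V *ᵥ y)) * (w ⬝ᵥ w) := dot_sq_le _ _
  have h1 := h y
  have h2 := dot_self_nonneg y
  have h3 := dot_self_nonneg w
  nlinarith [dot_self_nonneg (V *ᵥ y)]

lemma isometry_dot {p q : ℕ} (U : Matrix (Fin p) (Fin q) ℝ) (hU : Uᵀ * U = 1)
    (y : Fin q → ℝ) : (U *ᵥ y) ⬝ᵥ (U *ᵥ y) = y ⬝ᵥ y := by
  rw [adjoint_dot, Matrix.mulVec_mulVec, hU, Matrix.one_mulVec]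

lemma col_mul {a b c : ℕ} (M : Matrix (Fin a) (Fin b) ℝ) (B : Matrix (Fin b) (Fin c) ℝ)
    (j : Fin c) : (M *ᵥ fun k => B k j) = fun k => (M * B) k j := by
  ext k
  simp [Matrix.mulVec, Matrix.mul_apply, dotProduct]

lemma dot_col {p q s : ℕ} (A : Matrix (Fin p) (Fin q) ℝ) (B : Matrix (Fin p) (Fin s) ℝ)
    (i : Fin q) (j : Fin s) :
    (fun k => A k i) ⬝ᵥ (fun k => B k j) = (Aᵀ * B) i j := by
  simp [dotProduct, Matrix.mul_apply]

lemma spectral_pack {m n : ℕ} (Z : Matrix (Fin m) (Fin n) ℝ) :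
    ∃ W : Matrix (Fin n) (Fin n) ℝ,
      Wᵀ * W = 1 ∧ W * Wᵀ = 1 ∧
      Wᵀ * (Zᵀ * Z) * W =
        Matrix.diagonal ((Matrix.isHermitian_conjTranspose_mul_self Z).eigenvalues) := by
  set hH := Matrix.isHermitian_conjTranspose_mul_self Z with hHdef
  set W : Matrix (Fin n) (Fin n) ℝ := (hH.eigenvectorUnitary : Matrix (Fin n) (Fin n) ℝ) with hW
  have hstar : star W = Wᵀ := by
    rw [Matrix.star_eq_conjTranspose, Matrix.conjTranspose_eq_transpose_of_trivial]
  have hmem := hH.eigenvectorUnitary.2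
  rw [Unitary.mem_iff] at hmem
  refine ⟨W, ?_, ?_, ?_⟩
  · rw [← hstar]; exact hmem.1
  · rw [← hstar]; exact hmem.2
  · have h := hH.conjStarAlgAut_star_eigenvectorUnitary
    rw [Unitary.conjStarAlgAut_star_apply] at h
    rw [hstar] at h
    rw [show (Zᵀ : Matrix (Fin n) (Fin m) ℝ) = Zᴴ from
      (Matrix.conjTranspose_eq_transpose_of_trivial Z).symm]
    simp [RCLike.ofReal_real_eq_id] at h
    exact h

lemma dual_le {m n r : ℕ} (U : Matrix (Fin m) (Fin r) ℝ) (V : Matrix (Fin n) (Fin r) ℝ)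
    (hU : Uᵀ * U = 1) (hV : Vᵀ * V = 1) (Z : Matrix (Fin m) (Fin n) ℝ) :
    frobInner (U * Vᵀ) Z ≤ nuclearNorm Z := by
  obtain ⟨W, hW1, hW2, hspec⟩ := spectral_pack Z
  set μ := (Matrix.isHermitian_conjTranspose_mul_self Z).eigenvalues with hμ
  have hμ0 : ∀ i, 0 ≤ μ i := fun i => Matrix.eigenvalues_conjTranspose_mul_self_nonneg Z i
  have hZw : ∀ i : Fin n, (Z *ᵥ fun k => W k i) ⬝ᵥ (Z *ᵥ fun k => W k i) = μ i := by
    intro i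
    rw [adjoint_dot, Matrix.mulVec_mulVec, col_mul (Zᵀ * Z) W i, dot_col, ← Matrix.mul_assoc,
      hspec, Matrix.diagonal_apply_eq]
  have hGw : ∀ i : Fin n, ((U * Vᵀ) *ᵥ fun k => W k i) ⬝ᵥ ((U * Vᵀ) *ᵥ fun k => W k i) ≤ 1 := by
    intro i
    have h1 : ((U * Vᵀ) *ᵥ fun k => W k i) = U *ᵥ (Vᵀ *ᵥ fun k => W k i) := by
      rw [Matrix.mulVec_mulVec]
    rw [h1, isometry_dot U hU]
    have h2 := contraction V (fun y => le_of_eq (isometry_dot V hV y)) (fun k => W k i)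
    have h3 : (fun k => W k i) ⬝ᵥ (fun k => W k i) = 1 := by
      rw [dot_col, hW1, Matrix.one_apply_eq]
    linarith
  have htr : frobInner (U * Vᵀ) Z
      = ∑ i, ((U * Vᵀ) *ᵥ fun k => W k i) ⬝ᵥ (Z *ᵥ fun k => W k i) := by
    have h1 : ∀ i : Fin n, ((U * Vᵀ) *ᵥ fun k => W k i) ⬝ᵥ (Z *ᵥ fun k => W k i)
        = (Wᵀ * ((U * Vᵀ)ᵀ * Z) * W) i i := by
      intro i
      rw [adjoint_dot, Matrix.mulVec_mulVec, col_mul ((U * Vᵀ)ᵀ * Z) W i, dot_col,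
        ← Matrix.mul_assoc]
    rw [Finset.sum_congr rfl fun i _ => h1 i]
    have h2 : (Wᵀ * ((U * Vᵀ)ᵀ * Z) * W).trace = ((U * Vᵀ)ᵀ * Z).trace := by
      rw [Matrix.trace_mul_comm, ← Matrix.mul_assoc, hW2, Matrix.one_mul]
    have h3 : (Wᵀ * ((U * Vᵀ)ᵀ * Z) * W).trace
        = ∑ i, (Wᵀ * ((U * Vᵀ)ᵀ * Z) * W) i i := rfl
    rw [← h3, h2]
    rfl
  rw [htr]
  unfold nuclearNorm
  apply Finset.sum_le_sum
  intro i _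
  calc ((U * Vᵀ) *ᵥ fun k => W k i) ⬝ᵥ (Z *ᵥ fun k => W k i)
      ≤ Real.sqrt (((U * Vᵀ) *ᵥ fun k => W k i) ⬝ᵥ ((U * Vᵀ) *ᵥ fun k => W k i))
        * Real.sqrt ((Z *ᵥ fun k => W k i) ⬝ᵥ (Z *ᵥ fun k => W k i)) := dot_le_sqrt _ _
    _ ≤ 1 * Real.sqrt (μ i) := by
        apply mul_le_mul (Real.sqrt_le_one.mpr (hGw i)) (le_of_eq (by rw [hZw i]))
          (Real.sqrt_nonneg _) one_pos.le
    _ = singularValues Z i := by rw [one_mul]; rfl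

lemma diag_mulVec {r : ℕ} (S : Matrix (Fin r) (Fin r) ℝ)
    (hSdiag : ∀ i j : Fin r, i ≠ j → S i j = 0) (b : Fin r → ℝ) :
    S *ᵥ b = fun j => S j j * b j := by
  funext j
  rw [Matrix.mulVec]
  exact Finset.sum_eq_single j (fun k _ hk => by
    show S j k * b k = 0
    rw [hSdiag j k (Ne.symm hk), zero_mul])
    (fun h => absurd (Finset.mem_univ j) h)

lemma nuclear_le_traceS {m n r : ℕ} (X : Matrix (Fin m) (Fin n) ℝ)
    (U : Matrix (Fin m) (Fin r) ℝ) (S : Matrix (Fin r) (Fin r) ℝ)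
    (V : Matrix (Fin n) (Fin r) ℝ)
    (hU : Uᵀ * U = 1) (hV : Vᵀ * V = 1)
    (hSdiag : ∀ i j : Fin r, i ≠ j → S i j = 0)
    (hSnn : ∀ i : Fin r, 0 ≤ S i i)
    (hX : X = U * S * Vᵀ) :
    nuclearNorm X ≤ S.trace := by
  obtain ⟨W, hW1, hW2, hspec⟩ := spectral_pack X
  set μ := (Matrix.isHermitian_conjTranspose_mul_self X).eigenvalues with hμ
  have hμ0 : ∀ i, 0 ≤ μ i := fun i => Matrix.eigenvalues_conjTranspose_mul_self_nonneg X i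
  set σ : Fin n → ℝ := fun i => Real.sqrt (μ i) with hσ
  have hσ0 : ∀ i, 0 ≤ σ i := fun i => Real.sqrt_nonneg _
  have hσsq : ∀ i, σ i ^ 2 = μ i := fun i => Real.sq_sqrt (hμ0 i)
  have hXw : ∀ i j : Fin n, (X *ᵥ fun k => W k i) ⬝ᵥ (X *ᵥ fun k => W k j)
      = Matrix.diagonal μ i j := by
    intro i j
    rw [adjoint_dot, Matrix.mulVec_mulVec, col_mul (Xᵀ * X) W j, dot_col, ← Matrix.mul_assoc,
      hspec]
  set Ut : Matrix (Fin m) (Fin n) ℝ := fun k i => (σ i)⁻¹ * (X *ᵥ fun l => W l i) k with hUtdef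
  have hUtc : ∀ i j : Fin n, (fun k => Ut k i) ⬝ᵥ (fun k => Ut k j)
      = (σ i)⁻¹ * (σ j)⁻¹ * Matrix.diagonal μ i j := by
    intro i j
    rw [← hXw i j, dotProduct, dotProduct, Finset.mul_sum]
    exact Finset.sum_congr rfl fun k _ => by simp only [hUtdef]; ring
  have hUtUt : Utᵀ * Ut = Matrix.diagonal (fun i => (σ i)⁻¹ * (σ i)⁻¹ * μ i) := by
    ext i j
    rw [← dot_col, hUtc]
    by_cases h : i = j
    · subst h; rw [Matrix.diagonal_apply_eq, Matrix.diagonal_apply_eq]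
    · rw [Matrix.diagonal_apply_ne _ h, Matrix.diagonal_apply_ne _ h, mul_zero]
  have hε : ∀ i, (σ i)⁻¹ * (σ i)⁻¹ * μ i ≤ 1 := by
    intro i
    rcases eq_or_lt_of_le (hμ0 i) with h0 | h0
    · rw [← h0, mul_zero]; norm_num
    · have hσpos : 0 < σ i := Real.sqrt_pos.mpr h0
      rw [← hσsq i, sq]
      rw [show (σ i)⁻¹ * (σ i)⁻¹ * (σ i * σ i) = ((σ i)⁻¹ * σ i) * ((σ i)⁻¹ * σ i) by ring,
        inv_mul_cancel₀ (ne_of_gt hσpos), one_mul]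
  have hcontr : ∀ y : Fin n → ℝ, (Ut *ᵥ y) ⬝ᵥ (Ut *ᵥ y) ≤ y ⬝ᵥ y := by
    intro y
    rw [adjoint_dot, Matrix.mulVec_mulVec, hUtUt]
    have hd : (Matrix.diagonal (fun i => (σ i)⁻¹ * (σ i)⁻¹ * μ i)) *ᵥ y
        = fun i => ((σ i)⁻¹ * (σ i)⁻¹ * μ i) * y i := by
      funext i
      simp [Matrix.mulVec, dotProduct, Matrix.diagonal_apply, Finset.sum_ite_eq]
    rw [hd, dotProduct, dotProduct]
    apply Finset.sum_le_sum
    intro i _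
    have h1 : ((σ i)⁻¹ * (σ i)⁻¹ * μ i) * (y i * y i) ≤ 1 * (y i * y i) :=
      mul_le_mul_of_nonneg_right (hε i) (mul_self_nonneg _)
    calc y i * (((σ i)⁻¹ * (σ i)⁻¹ * μ i) * y i)
        = ((σ i)⁻¹ * (σ i)⁻¹ * μ i) * (y i * y i) := by ring
      _ ≤ 1 * (y i * y i) := h1
      _ = y i * y i := one_mul _
  -- the key per-index identity
  have hterm : ∀ i : Fin n, σ i = ∑ j, S j j * ((Uᵀ * Ut) j i * (Vᵀ * W) j i) := by
    intro i
    have ha : (fun k => Ut k i) ⬝ᵥ (X *ᵥ fun k => W k i) = (σ i)⁻¹ * μ i := by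
      rw [← Matrix.diagonal_apply_eq (i := i) μ, ← hXw i i, dotProduct, dotProduct,
        Finset.mul_sum]
      exact Finset.sum_congr rfl fun k _ => by simp only [hUtdef]; ring
    have hlhs : (fun k => Ut k i) ⬝ᵥ (X *ᵥ fun k => W k i) = σ i := by
      rw [ha]
      rcases eq_or_lt_of_le (hμ0 i) with h0 | h0
      · rw [← h0, mul_zero, hσ]; simp [← h0]
      · have hσpos : 0 < σ i := Real.sqrt_pos.mpr h0
        rw [← hσsq i, sq, ← mul_assoc, inv_mul_cancel₀ (ne_of_gt hσpos), one_mul]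
    have hrhs : (fun k => Ut k i) ⬝ᵥ (X *ᵥ fun k => W k i)
        = ∑ j, S j j * ((Uᵀ * Ut) j i * (Vᵀ * W) j i) := by
      conv_lhs => rw [hX]
      rw [← Matrix.mulVec_mulVec, ← Matrix.mulVec_mulVec, dotProduct_comm, adjoint_dot,
        col_mul Uᵀ Ut i, col_mul Vᵀ W i, diag_mulVec S hSdiag, dotProduct]
      exact Finset.sum_congr rfl fun j _ => by ring
    rw [← hlhs, hrhs]
  -- column sums
  have hb : ∀ j : Fin r, ∑ i, (Vᵀ * W) j i ^ 2 = 1 := by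
    intro j
    have h1 : ∑ i, (Vᵀ * W) j i ^ 2 = ((Vᵀ * W) * (Vᵀ * W)ᵀ) j j := by
      simp [Matrix.mul_apply, sq, mul_comm]
    rw [h1, Matrix.transpose_mul, Matrix.transpose_transpose, Matrix.mul_assoc,
      ← Matrix.mul_assoc W Wᵀ V, hW2, Matrix.one_mul, hV, Matrix.one_apply_eq]
  have ha2 : ∀ j : Fin r, ∑ i, (Uᵀ * Ut) j i ^ 2 ≤ 1 := by
    intro j
    have hcol : ∀ i, (Uᵀ * Ut) j i = (Utᵀ *ᵥ fun k => U k j) i := by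
      intro i
      simp [Matrix.mul_apply, Matrix.mulVec, dotProduct, mul_comm]
    have h1 : ∑ i, (Uᵀ * Ut) j i ^ 2 = (Utᵀ *ᵥ fun k => U k j) ⬝ᵥ (Utᵀ *ᵥ fun k => U k j) := by
      rw [dotProduct]
      exact Finset.sum_congr rfl fun i _ => by rw [hcol i, sq]
    rw [h1]
    have h2 := contraction Ut hcontr (fun k => U k j)
    have h3 : (fun k => U k j) ⬝ᵥ (fun k => U k j) = 1 := by
      rw [dot_col, hU, Matrix.one_apply_eq]
    linarith
  have hab : ∀ j : Fin r, ∑ i, (Uᵀ * Ut) j i * (Vᵀ * W) j i ≤ 1 := by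
    intro j
    have hcs := Finset.sum_mul_sq_le_sq_mul_sq Finset.univ
      (fun i => (Uᵀ * Ut) j i) (fun i => (Vᵀ * W) j i)
    have h2 := ha2 j
    have h3 := hb j
    have h4 : (0:ℝ) ≤ ∑ i, (Vᵀ * W) j i ^ 2 := Finset.sum_nonneg fun i _ => sq_nonneg _
    nlinarith [sq_nonneg ((∑ i, (Uᵀ * Ut) j i * (Vᵀ * W) j i) + 1)]
  -- put it together
  have hfinal : nuclearNorm X = ∑ j, S j j * ∑ i, (Uᵀ * Ut) j i * (Vᵀ * W) j i := by
    unfold nuclearNorm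
    have h1 : ∀ i, singularValues X i = σ i := fun i => rfl
    rw [Finset.sum_congr rfl fun i _ => (h1 i).trans (hterm i), Finset.sum_comm]
    exact Finset.sum_congr rfl fun j _ => by rw [Finset.mul_sum]
  rw [hfinal]
  have htr : S.trace = ∑ j, S j j := rfl
  rw [htr]
  apply Finset.sum_le_sum
  intro j _
  calc S j j * ∑ i, (Uᵀ * Ut) j i * (Vᵀ * W) j i ≤ S j j * 1 :=
        mul_le_mul_of_nonneg_left (hab j) (hSnn j)
    _ = S j j := mul_one _


lemma frob_smul_X {m n r : ℕ}
    (U : Matrix (Fin m) (Fin r) ℝ) (S : Matrix (Fin r) (Fin r) ℝ)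
    (V : Matrix (Fin n) (Fin r) ℝ)
    (hU : Uᵀ * U = 1) (hV : Vᵀ * V = 1) :
    frobInner (U * Vᵀ) (U * S * Vᵀ) = S.trace := by
  unfold frobInner
  have h1 : (U * Vᵀ)ᵀ * (U * S * Vᵀ) = V * (S * Vᵀ) := by
    rw [Matrix.transpose_mul, Matrix.transpose_transpose]
    simp only [Matrix.mul_assoc]
    rw [← Matrix.mul_assoc Uᵀ U, hU, Matrix.one_mul]
  rw [h1, Matrix.trace_mul_comm, Matrix.mul_assoc, hV, Matrix.mul_one]

lemma frob_sub {m n : ℕ} (G Z X : Matrix (Fin m) (Fin n) ℝ) :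
    frobInner G (Z - X) = frobInner G Z - frobInner G X := by
  unfold frobInner
  rw [Matrix.mul_sub, Matrix.trace_sub]

end NucAux


/-- For any matrix `X` of rank `r` with reduced SVD `X = U S Vᵀ`
(`U`, `V` with orthonormal columns, `S` positive diagonal), the matrix `U Vᵀ` is a
subgradient of the nuclear norm at `X`. -/
theorem uv_mem_subdifferential_nuclearNorm
    {m n r : ℕ} (X : Matrix (Fin m) (Fin n) ℝ)
    (U : Matrix (Fin m) (Fin r) ℝ) (S : Matrix (Fin r) (Fin r) ℝ)
    (V : Matrix (Fin n) (Fin r) ℝ)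
    (hrank : X.rank = r)
    (hU : Uᵀ * U = 1) (hV : Vᵀ * V = 1)
    (hSdiag : ∀ i j : Fin r, i ≠ j → S i j = 0)
    (hSpos : ∀ i : Fin r, 0 < S i i)
    (hX : X = U * S * Vᵀ) :
    ∀ Z : Matrix (Fin m) (Fin n) ℝ,
      nuclearNorm Z ≥ nuclearNorm X + frobInner (U * Vᵀ) (Z - X) := by
  intro Z
  have hdual := NucAux.dual_le U V hU hV Z
  have hB := NucAux.nuclear_le_traceS X U S V hU hV hSdiag (fun i => (hSpos i).le) hX
  have hfX : frobInner (U * Vᵀ) X = S.trace := by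
    rw [hX]; exact NucAux.frob_smul_X U S V hU hV
  rw [ge_iff_le, NucAux.frob_sub, hfX]
  linarith
end
end

section
/- For any matrix X of rank r with reduced SVD X = U S Vᵀ and any matrix W satisfying UᵀW = 0, W V = 0, and ‖W‖ ≤ 1 (operator norm), the matrix U Vᵀ + W is a subgradient of the nuclear norm at X. -/
noncomputable section
open Matrix BigOperators

namespace NuclearAuxSubgrad

/-- Cauchy–Schwarz for `dotProduct`. -/
lemma dot_le_sqrt {k : ℕ} (x y : Fin k → ℝ) :
    x ⬝ᵥ y ≤ Real.sqrt (x ⬝ᵥ x) * Real.sqrt (y ⬝ᵥ y) := by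
  simpa [dotProduct, sq] using Real.sum_mul_le_sqrt_mul_sqrt Finset.univ x y

lemma dot_self_nonneg {k : ℕ} (x : Fin k → ℝ) : 0 ≤ x ⬝ᵥ x :=
  Finset.sum_nonneg fun i _ => mul_self_nonneg _

lemma dot_mulVec_left {a b : ℕ} (A : Matrix (Fin a) (Fin b) ℝ) (u : Fin a → ℝ) (v : Fin b → ℝ) :
    u ⬝ᵥ (A *ᵥ v) = (Aᵀ *ᵥ u) ⬝ᵥ v := by
  rw [dotProduct_mulVec, mulVec_transpose]

lemma dot_mulVec_mulVec {a b c : ℕ} (A : Matrix (Fin a) (Fin b) ℝ)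
    (B : Matrix (Fin a) (Fin c) ℝ) (x : Fin b → ℝ) (y : Fin c → ℝ) :
    (A *ᵥ x) ⬝ᵥ (B *ᵥ y) = x ⬝ᵥ ((Aᵀ * B) *ᵥ y) := by
  have h := dot_mulVec_left Aᵀ x (B *ᵥ y)
  rw [transpose_transpose] at h
  rw [← mulVec_mulVec]
  exact h.symm

/-- two-dimensional Cauchy–Schwarz with square roots. -/
lemma sqrt_cs {A B C D : ℝ} (hA : 0 ≤ A) (hB : 0 ≤ B) (hC : 0 ≤ C) (hD : 0 ≤ D) :
    Real.sqrt A * Real.sqrt B + Real.sqrt C * Real.sqrt D ≤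
      Real.sqrt (A + C) * Real.sqrt (B + D) := by
  have h := Real.sum_mul_le_sqrt_mul_sqrt Finset.univ
      ![Real.sqrt A, Real.sqrt C] ![Real.sqrt B, Real.sqrt D]
  simpa [Fin.sum_univ_two, sq, Real.mul_self_sqrt, hA, hB, hC, hD] using h

section evec

variable {m n : ℕ} (B : Matrix (Fin m) (Fin n) ℝ)

/-- orthonormal eigenvectors of `Bᴴ * B`. -/
def evec (i : Fin n) : Fin n → ℝ :=
  ⇑((Matrix.isHermitian_conjTranspose_mul_self B).eigenvectorBasis i)

/-- the corresponding eigenvalues. -/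
def eval (i : Fin n) : ℝ := (Matrix.isHermitian_conjTranspose_mul_self B).eigenvalues i

lemma sv_eq (i : Fin n) : singularValues B i = Real.sqrt (eval B i) := rfl

lemma evec_eigen (i : Fin n) : (Bᴴ * B) *ᵥ evec B i = eval B i • evec B i :=
  (Matrix.isHermitian_conjTranspose_mul_self B).mulVec_eigenvectorBasis i

lemma evec_eigen' (i : Fin n) : (Bᵀ * B) *ᵥ evec B i = eval B i • evec B i := by
  have h : Bᴴ = Bᵀ := by ext i j; simp [Matrix.conjTranspose_apply]
  rw [← h]; exact evec_eigen B i

lemma evec_dot_self (i : Fin n) : evec B i ⬝ᵥ evec B i = 1 := by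
  have := orthonormal_iff_ite.mp
    (Matrix.isHermitian_conjTranspose_mul_self B).eigenvectorBasis.orthonormal i i
  simp only [PiLp.inner_apply, RCLike.inner_apply, if_pos rfl] at this
  simpa [dotProduct, evec, mul_comm] using this

lemma mulVec_evec_dot_self (i : Fin n) :
    (B *ᵥ evec B i) ⬝ᵥ (B *ᵥ evec B i) = eval B i := by
  rw [dot_mulVec_mulVec, evec_eigen', dotProduct_smul, smul_eq_mul, evec_dot_self, mul_one]

lemma eval_nonneg (i : Fin n) : 0 ≤ eval B i := by
  rw [← mulVec_evec_dot_self]; exact dot_self_nonneg _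

/-- trace expansion of the Frobenius inner product along the eigenbasis of `Bᴴ * B`. -/
lemma frob_expand (A : Matrix (Fin m) (Fin n) ℝ) :
    frobInner A B = ∑ i, (A *ᵥ evec B i) ⬝ᵥ (B *ᵥ evec B i) := by
  classical
  set hB := Matrix.isHermitian_conjTranspose_mul_self B with hBdef
  set P : Matrix (Fin n) (Fin n) ℝ := (hB.eigenvectorUnitary : Matrix (Fin n) (Fin n) ℝ)
    with hPdef
  have hstar : star P = Pᵀ := by ext i j; simp [Matrix.star_apply]
  have hPPT : P * Pᵀ = 1 := by
    have := Matrix.mem_unitaryGroup_iff.mp hB.eigenvectorUnitary.prop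
    rwa [hstar] at this
  have hcol : ∀ i : Fin n, (fun k => P k i) = evec B i := by
    intro i; funext k; simp [hPdef, evec, hBdef]
  have htr : (Aᵀ * B).trace = (Pᵀ * (Aᵀ * B) * P).trace := by
    rw [Matrix.trace_mul_cycle, ← Matrix.mul_assoc, hPPT, Matrix.one_mul]
  have hdiag : ∀ i : Fin n, (Pᵀ * (Aᵀ * B) * P) i i
      = (fun k => P k i) ⬝ᵥ ((Aᵀ * B) *ᵥ fun k => P k i) := by
    intro i
    simp only [Matrix.mul_apply, Matrix.transpose_apply, Matrix.mulVec, dotProduct,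
      Finset.sum_mul, Finset.mul_sum]
    rw [Finset.sum_comm]
    exact Finset.sum_congr rfl fun j _ => Finset.sum_congr rfl fun k _ =>
      Finset.sum_congr rfl fun x _ => by ring
  have hstep : frobInner A B = ∑ i, (fun k => P k i) ⬝ᵥ ((Aᵀ * B) *ᵥ fun k => P k i) := by
    rw [frobInner, htr, Matrix.trace]
    exact Finset.sum_congr rfl fun i _ => hdiag i
  rw [hstep]
  refine Finset.sum_congr rfl fun i _ => ?_
  rw [hcol, ← mulVec_mulVec, dot_mulVec_left, transpose_transpose, dotProduct_comm]

end evec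

/-- operator-norm bound on the quadratic form. -/
lemma opNorm_mulVec_bound {m n : ℕ} (W : Matrix (Fin m) (Fin n) ℝ) (q : Fin n → ℝ) :
    (W *ᵥ q) ⬝ᵥ (W *ᵥ q) ≤ opNorm W ^ 2 * (q ⬝ᵥ q) := by
  classical
  set hB := Matrix.isHermitian_conjTranspose_mul_self W with hBdef
  set P : Matrix (Fin n) (Fin n) ℝ := (hB.eigenvectorUnitary : Matrix (Fin n) (Fin n) ℝ)
    with hPdef
  have hstar : star P = Pᵀ := by ext i j; simp [Matrix.star_apply]
  have hPPT : P * Pᵀ = 1 := by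
    have := Matrix.mem_unitaryGroup_iff.mp hB.eigenvectorUnitary.prop
    rwa [hstar] at this
  have hofReal : (RCLike.ofReal ∘ hB.eigenvalues : Fin n → ℝ) = hB.eigenvalues := by
    funext i; simp
  have hspec : Wᴴ * W = P * Matrix.diagonal hB.eigenvalues * Pᵀ := by
    have := hB.spectral_theorem
    rw [Unitary.conjStarAlgAut_apply] at this
    rwa [hstar, hofReal] at this
  set d : Fin n → ℝ := Pᵀ *ᵥ q with hd
  have hdd : d ⬝ᵥ d = q ⬝ᵥ q := by
    rw [hd, dot_mulVec_mulVec, transpose_transpose, hPPT, Matrix.one_mulVec]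
  have hWq : (W *ᵥ q) ⬝ᵥ (W *ᵥ q) = ∑ i, hB.eigenvalues i * d i ^ 2 := by
    have hWH : Wᴴ = Wᵀ := by ext i j; simp [Matrix.conjTranspose_apply]
    have h1 : (W *ᵥ q) ⬝ᵥ (W *ᵥ q) = q ⬝ᵥ ((Wᴴ * W) *ᵥ q) := by
      rw [hWH, dot_mulVec_mulVec]
    rw [h1]
    conv_lhs => rw [hspec]
    rw [← mulVec_mulVec, ← mulVec_mulVec, dot_mulVec_left, ← hd]
    simp only [Matrix.mulVec_diagonal, dotProduct, Pi.smul_apply]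
    exact Finset.sum_congr rfl fun i _ => by ring
  have hop : 0 ≤ opNorm W := Real.iSup_nonneg fun i => Real.sqrt_nonneg _
  have hbound : ∀ i : Fin n, hB.eigenvalues i ≤ opNorm W ^ 2 := by
    intro i
    have h1 : singularValues W i ≤ opNorm W :=
      le_ciSup (Set.Finite.bddAbove (Set.finite_range _)) i
    have h2 : singularValues W i ^ 2 = hB.eigenvalues i := by
      rw [sv_eq]
      exact Real.sq_sqrt (eval_nonneg W i)
    calc hB.eigenvalues i = singularValues W i ^ 2 := h2.symm
      _ ≤ opNorm W ^ 2 := pow_le_pow_left₀ (Real.sqrt_nonneg _) h1 2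
  calc (W *ᵥ q) ⬝ᵥ (W *ᵥ q) = ∑ i, hB.eigenvalues i * d i ^ 2 := hWq
    _ ≤ ∑ i, opNorm W ^ 2 * d i ^ 2 := by
        refine Finset.sum_le_sum fun i _ => ?_
        exact mul_le_mul_of_nonneg_right (hbound i) (sq_nonneg _)
    _ = opNorm W ^ 2 * (d ⬝ᵥ d) := by
        rw [← Finset.mul_sum]
        congr 1
        simp [dotProduct, sq]
    _ = opNorm W ^ 2 * (q ⬝ᵥ q) := by rw [hdd]

end NuclearAuxSubgrad

open NuclearAuxSubgrad

/-- For any matrix `X` with reduced SVD `X = U S Vᵀ` and any matrix `W`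
with `Uᵀ W = 0`, `W V = 0` and `‖W‖ ≤ 1` (operator norm), `U Vᵀ + W` is a subgradient of
the nuclear norm at `X`. -/
theorem uv_add_w_mem_subdifferential_nuclearNorm
    {m n r : ℕ} (X : Matrix (Fin m) (Fin n) ℝ)
    (U : Matrix (Fin m) (Fin r) ℝ) (S : Matrix (Fin r) (Fin r) ℝ)
    (V : Matrix (Fin n) (Fin r) ℝ) (W : Matrix (Fin m) (Fin n) ℝ)
    (hrank : X.rank = r)
    (hU : Uᵀ * U = 1) (hV : Vᵀ * V = 1)
    (hSdiag : ∀ i j : Fin r, i ≠ j → S i j = 0)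
    (hSpos : ∀ i : Fin r, 0 < S i i)
    (hX : X = U * S * Vᵀ)
    (hWU : Uᵀ * W = 0) (hWV : W * V = 0) (hWnorm : opNorm W ≤ 1) :
    ∀ Z : Matrix (Fin m) (Fin n) ℝ,
      nuclearNorm Z ≥ nuclearNorm X + frobInner (U * Vᵀ + W) (Z - X) := by
  classical
  set G : Matrix (Fin m) (Fin n) ℝ := U * Vᵀ + W with hG
  have hop : 0 ≤ opNorm W := Real.iSup_nonneg fun i => Real.sqrt_nonneg _
  -- the key bilinear bound : uᵀ G v ≤ ‖u‖ ‖v‖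
  have key : ∀ (u : Fin m → ℝ) (v : Fin n → ℝ),
      u ⬝ᵥ (G *ᵥ v) ≤ Real.sqrt (u ⬝ᵥ u) * Real.sqrt (v ⬝ᵥ v) := by
    intro u v
    set a : Fin r → ℝ := Uᵀ *ᵥ u with ha
    set b : Fin r → ℝ := Vᵀ *ᵥ v with hb
    set p : Fin m → ℝ := u - U *ᵥ a with hp
    set q : Fin n → ℝ := v - V *ᵥ b with hq
    have hUta : Uᵀ *ᵥ (U *ᵥ a) = a := by
      rw [mulVec_mulVec, hU, Matrix.one_mulVec]
    have hVtb : Vᵀ *ᵥ (V *ᵥ b) = b := by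
      rw [mulVec_mulVec, hV, Matrix.one_mulVec]
    have hUtp : Uᵀ *ᵥ p = 0 := by
      rw [hp, Matrix.mulVec_sub, hUta, ← ha, sub_self]
    have hVtq : Vᵀ *ᵥ q = 0 := by
      rw [hq, Matrix.mulVec_sub, hVtb, ← hb, sub_self]
    have h1 : u ⬝ᵥ ((U * Vᵀ) *ᵥ v) = a ⬝ᵥ b := by
      rw [← mulVec_mulVec, dot_mulVec_left, ← ha, ← hb]
    have hWq : W *ᵥ q = W *ᵥ v := by
      rw [hq, Matrix.mulVec_sub, mulVec_mulVec, hWV, Matrix.zero_mulVec, sub_zero]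
    have h2 : u ⬝ᵥ (W *ᵥ v) = p ⬝ᵥ (W *ᵥ q) := by
      rw [hWq, hp, sub_dotProduct]
      have hWtU0 : Wᵀ * U = 0 := by
        have := congrArg Matrix.transpose hWU
        simpa using this
      have hz : (U *ᵥ a) ⬝ᵥ (W *ᵥ v) = 0 := by
        rw [dotProduct_comm,
          show (W *ᵥ v) ⬝ᵥ (U *ᵥ a) = v ⬝ᵥ ((Wᵀ * U) *ᵥ a) from dot_mulVec_mulVec W U v a,
          hWtU0, Matrix.zero_mulVec, dotProduct_zero]
      rw [hz, sub_zero]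
    have hu : u = U *ᵥ a + p := by rw [hp]; abel
    have hv : v = V *ᵥ b + q := by rw [hq]; abel
    have hcrossU : (U *ᵥ a) ⬝ᵥ p = 0 := by
      rw [dotProduct_comm, dot_mulVec_left, hUtp, zero_dotProduct]
    have hcrossV : (V *ᵥ b) ⬝ᵥ q = 0 := by
      rw [dotProduct_comm, dot_mulVec_left, hVtq, zero_dotProduct]
    have hUaUa : (U *ᵥ a) ⬝ᵥ (U *ᵥ a) = a ⬝ᵥ a := by
      rw [dot_mulVec_mulVec, hU, Matrix.one_mulVec]
    have hVbVb : (V *ᵥ b) ⬝ᵥ (V *ᵥ b) = b ⬝ᵥ b := by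
      rw [dot_mulVec_mulVec, hV, Matrix.one_mulVec]
    have huu : u ⬝ᵥ u = a ⬝ᵥ a + p ⬝ᵥ p := by
      calc u ⬝ᵥ u = (U *ᵥ a + p) ⬝ᵥ (U *ᵥ a + p) := by rw [← hu]
        _ = (U *ᵥ a) ⬝ᵥ (U *ᵥ a) + (U *ᵥ a) ⬝ᵥ p + (p ⬝ᵥ (U *ᵥ a) + p ⬝ᵥ p) := by
            rw [add_dotProduct, dotProduct_add, dotProduct_add]
        _ = a ⬝ᵥ a + p ⬝ᵥ p := by
            rw [hUaUa, hcrossU, dotProduct_comm p (U *ᵥ a), hcrossU]; ring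
    have hvv : v ⬝ᵥ v = b ⬝ᵥ b + q ⬝ᵥ q := by
      calc v ⬝ᵥ v = (V *ᵥ b + q) ⬝ᵥ (V *ᵥ b + q) := by rw [← hv]
        _ = (V *ᵥ b) ⬝ᵥ (V *ᵥ b) + (V *ᵥ b) ⬝ᵥ q + (q ⬝ᵥ (V *ᵥ b) + q ⬝ᵥ q) := by
            rw [add_dotProduct, dotProduct_add, dotProduct_add]
        _ = b ⬝ᵥ b + q ⬝ᵥ q := by
            rw [hVbVb, hcrossV, dotProduct_comm q (V *ᵥ b), hcrossV]; ring
    have h5 : p ⬝ᵥ (W *ᵥ q) ≤ Real.sqrt (p ⬝ᵥ p) * Real.sqrt (q ⬝ᵥ q) := by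
      have hcs := dot_le_sqrt p (W *ᵥ q)
      have hWqq : (W *ᵥ q) ⬝ᵥ (W *ᵥ q) ≤ q ⬝ᵥ q := by
        have hb1 := opNorm_mulVec_bound W q
        have hsq : opNorm W ^ 2 ≤ 1 := by nlinarith
        calc (W *ᵥ q) ⬝ᵥ (W *ᵥ q) ≤ opNorm W ^ 2 * (q ⬝ᵥ q) := hb1
          _ ≤ 1 * (q ⬝ᵥ q) := mul_le_mul_of_nonneg_right hsq (dot_self_nonneg q)
          _ = q ⬝ᵥ q := one_mul _
      have hs : Real.sqrt ((W *ᵥ q) ⬝ᵥ (W *ᵥ q)) ≤ Real.sqrt (q ⬝ᵥ q) :=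
        Real.sqrt_le_sqrt hWqq
      calc p ⬝ᵥ (W *ᵥ q) ≤ Real.sqrt (p ⬝ᵥ p) * Real.sqrt ((W *ᵥ q) ⬝ᵥ (W *ᵥ q)) := hcs
        _ ≤ Real.sqrt (p ⬝ᵥ p) * Real.sqrt (q ⬝ᵥ q) :=
            mul_le_mul_of_nonneg_left hs (Real.sqrt_nonneg _)
    have h6 : a ⬝ᵥ b ≤ Real.sqrt (a ⬝ᵥ a) * Real.sqrt (b ⬝ᵥ b) := dot_le_sqrt a b
    have hsplit : u ⬝ᵥ (G *ᵥ v) = a ⬝ᵥ b + p ⬝ᵥ (W *ᵥ q) := by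
      rw [hG, Matrix.add_mulVec, dotProduct_add, h1, h2]
    rw [hsplit, huu, hvv]
    calc a ⬝ᵥ b + p ⬝ᵥ (W *ᵥ q)
        ≤ Real.sqrt (a ⬝ᵥ a) * Real.sqrt (b ⬝ᵥ b)
            + Real.sqrt (p ⬝ᵥ p) * Real.sqrt (q ⬝ᵥ q) := add_le_add h6 h5
      _ ≤ Real.sqrt (a ⬝ᵥ a + p ⬝ᵥ p) * Real.sqrt (b ⬝ᵥ b + q ⬝ᵥ q) :=
          sqrt_cs (dot_self_nonneg a) (dot_self_nonneg b)
            (dot_self_nonneg p) (dot_self_nonneg q)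
  -- ⟨G, Z⟩ ≤ ‖Z‖_*
  have hGZle : ∀ Z' : Matrix (Fin m) (Fin n) ℝ, frobInner G Z' ≤ nuclearNorm Z' := by
    intro Z'
    rw [frob_expand Z' G, nuclearNorm]
    refine Finset.sum_le_sum fun i _ => ?_
    calc (G *ᵥ evec Z' i) ⬝ᵥ (Z' *ᵥ evec Z' i)
        = (Z' *ᵥ evec Z' i) ⬝ᵥ (G *ᵥ evec Z' i) := dotProduct_comm _ _
      _ ≤ Real.sqrt ((Z' *ᵥ evec Z' i) ⬝ᵥ (Z' *ᵥ evec Z' i)) * Real.sqrt (evec Z' i ⬝ᵥ evec Z' i) :=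
          key _ _
      _ = singularValues Z' i := by
          rw [mulVec_evec_dot_self, evec_dot_self, Real.sqrt_one, mul_one, sv_eq]
  -- ⟨G, X⟩ = ‖X‖_*
  have hWtU : Wᵀ * U = 0 := by
    have := congrArg Matrix.transpose hWU
    simpa using this
  have hSt : Sᵀ = S := by
    ext i j
    by_cases h : i = j
    · subst h; simp
    · rw [Matrix.transpose_apply, hSdiag j i (Ne.symm h), hSdiag i j h]
  have hGtX : Gᵀ * X = V * (S * Vᵀ) := by
    rw [hG, hX]
    simp only [Matrix.transpose_add, Matrix.transpose_mul, Matrix.transpose_transpose,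
      Matrix.add_mul]
    rw [show V * Uᵀ * (U * S * Vᵀ) = V * ((Uᵀ * U) * (S * Vᵀ)) by
      simp only [Matrix.mul_assoc]]
    rw [hU, Matrix.one_mul]
    rw [show Wᵀ * (U * S * Vᵀ) = (Wᵀ * U) * (S * Vᵀ) by simp only [Matrix.mul_assoc]]
    rw [hWtU, Matrix.zero_mul, add_zero]
  have hXtX : Xᵀ * X = V * (S * (S * Vᵀ)) := by
    rw [hX]
    simp only [Matrix.transpose_mul, Matrix.transpose_transpose, hSt]
    rw [show V * (S * Uᵀ) * (U * S * Vᵀ) = V * (S * ((Uᵀ * U) * (S * Vᵀ))) by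
      simp only [Matrix.mul_assoc]]
    rw [hU, Matrix.one_mul]
  have hSmulv : ∀ (x : Fin r → ℝ) (j : Fin r), (S *ᵥ x) j = S j j * x j := by
    intro x j
    have hrfl : (S *ᵥ x) j = ∑ k, S j k * x k := rfl
    rw [hrfl, Finset.sum_eq_single j]
    · intro k _ hk
      rw [hSdiag j k (Ne.symm hk), zero_mul]
    · intro h; exact absurd (Finset.mem_univ j) h
  have hterm : ∀ i : Fin n, (G *ᵥ evec X i) ⬝ᵥ (X *ᵥ evec X i) = singularValues X i := by
    intro i
    set v : Fin n → ℝ := evec X i with hvdef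
    set lam : ℝ := eval X i with hlam
    set σ : ℝ := Real.sqrt lam with hσ
    set c : Fin r → ℝ := Vᵀ *ᵥ v with hc
    have heig : (Xᵀ * X) *ᵥ v = lam • v := evec_eigen' X i
    have heig2 : V *ᵥ (S *ᵥ (S *ᵥ c)) = lam • v := by
      rw [← heig, hXtX, ← mulVec_mulVec, ← mulVec_mulVec, ← mulVec_mulVec, ← hc]
    have hSSc : S *ᵥ (S *ᵥ c) = lam • c := by
      have h8 : Vᵀ *ᵥ (V *ᵥ (S *ᵥ (S *ᵥ c))) = Vᵀ *ᵥ (lam • v) := by rw [heig2]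
      rwa [mulVec_mulVec, hV, Matrix.one_mulVec, Matrix.mulVec_smul, ← hc] at h8
    have hSc : S *ᵥ c = σ • c := by
      funext j
      rw [hSmulv, Pi.smul_apply, smul_eq_mul]
      by_cases hcj : c j = 0
      · rw [hcj]; ring
      · have h0 := congrFun hSSc j
        rw [hSmulv, hSmulv] at h0
        have h1 : S j j * (S j j * c j) = lam * c j := by
          simpa [Pi.smul_apply, smul_eq_mul] using h0
        have h1' : S j j ^ 2 * c j = lam * c j := by rw [sq, mul_assoc]; exact h1
        have h2 : S j j ^ 2 = lam := mul_right_cancel₀ hcj h1'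
        have h4 : S j j = σ := by rw [hσ, ← h2, Real.sqrt_sq (hSpos j).le]
        rw [h4]
    have hGv : (G *ᵥ v) ⬝ᵥ (X *ᵥ v) = v ⬝ᵥ ((Gᵀ * X) *ᵥ v) := dot_mulVec_mulVec G X v v
    rw [hGv, hGtX, ← mulVec_mulVec, ← mulVec_mulVec, ← hc, hSc, Matrix.mulVec_smul,
      dotProduct_smul, smul_eq_mul]
    rw [sv_eq, ← hlam, ← hσ]
    by_cases hlam0 : lam = 0
    · have hσ0 : σ = 0 := by rw [hσ, hlam0, Real.sqrt_zero]
      rw [hσ0, zero_mul]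
    · have hVc : V *ᵥ c = v := by
        have h5 : V *ᵥ (S *ᵥ (S *ᵥ c)) = lam • (V *ᵥ c) := by
          rw [hSSc, Matrix.mulVec_smul]
        have h6 : lam • (V *ᵥ c) = lam • v := by rw [← h5, heig2]
        exact smul_right_injective (Fin n → ℝ) hlam0 h6
      rw [hVc, hvdef, evec_dot_self, mul_one]
  have hGXeq : frobInner G X = nuclearNorm X := by
    rw [frob_expand X G, nuclearNorm]
    exact Finset.sum_congr rfl fun i _ => hterm i
  intro Z
  have h1 := hGZle Z
  have h2 : frobInner G (Z - X) = frobInner G Z - frobInner G X := by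
    simp [frobInner, Matrix.mul_sub, Matrix.trace_sub]
  rw [ge_iff_le, h2, hGXeq]
  linarith
end
end

section
/- Let T_1, …, T_L be linear subspaces of a finite-dimensional inner product space equipped with norms ‖·‖_{(i)}* (each a norm on the whole space). Define μ_{ij} = max{‖N‖_{(i)}* : N ∈ T_j, ‖N‖_{(j)}* ≤ 1} for i ≠ j. If there exist positive reals λ_1,…,λ_L with Σ_{j≠i} μ_{ij} λ_j / λ_i < 1 for every i, then the subspaces are independent: for every i, T_i ∩ Σ_{j≠i} T_j = {0}. -/
noncomputable section
open BigOperators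

/-- Let `T 1, …, T L` be subspaces of a finite-dimensional inner
product space, each equipped with a norm `ν i` on the whole space, and let `μ i j`
be coherence parameters satisfying `ν i N ≤ μ i j * ν j N` for `N ∈ T j` (as given by
their definition as a maximum). If positive `λ i` exist with
`Σ_{j ≠ i} μ i j * λ j / λ i < 1` for all `i`, then the subspaces are independent. -/
theorem subspaces_independent_of_incoherence
    {E : Type*} [NormedAddCommGroup E] [InnerProductSpace ℝ E] [FiniteDimensional ℝ E]
    {L : ℕ} (T : Fin L → Submodule ℝ E) (ν : Fin L → E → ℝ)
    (hν_nonneg : ∀ i x, 0 ≤ ν i x)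
    (hν_add : ∀ i x y, ν i (x + y) ≤ ν i x + ν i y)
    (hν_smul : ∀ i (c : ℝ) x, ν i (c • x) = |c| * ν i x)
    (hν_def : ∀ i x, ν i x = 0 → x = 0)
    (μ : Fin L → Fin L → ℝ)
    (hμ_def : ∀ i j, i ≠ j → IsGreatest ((fun N => ν i N) '' {N : E | N ∈ T j ∧ ν j N ≤ 1}) (μ i j))
    (lam : Fin L → ℝ) (hlam : ∀ i, 0 < lam i)
    (hbal : ∀ i, ∑ j ∈ Finset.univ.erase i, μ i j * lam j / lam i < 1) :
    ∀ i, T i ⊓ (⨆ j ∈ Finset.univ.erase i, T j) = ⊥ := by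
  classical
  -- basic facts about the norms
  have hν0 : ∀ j, ν j (0 : E) = 0 := by
    intro j
    have := hν_smul j 0 0
    simpa using this
  have hνneg : ∀ j (y : E), ν j (-y) = ν j y := by
    intro j y
    have := hν_smul j (-1) y
    simpa using this
  -- nonnegativity of μ
  have hμ_nonneg : ∀ i j, i ≠ j → 0 ≤ μ i j := by
    intro i j hij
    obtain ⟨N, _, hN⟩ := (hμ_def i j hij).1
    rw [← hN]; exact hν_nonneg i N
  -- coherence inequality
  have hcoh : ∀ i j, i ≠ j → ∀ N ∈ T j, ν i N ≤ μ i j * ν j N := by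
    intro i j hij N hN
    rcases eq_or_lt_of_le (hν_nonneg j N) with h0 | h0
    · have : N = 0 := hν_def j N h0.symm
      simp [this, hν0]
    · have hmem : ((ν j N)⁻¹ • N) ∈ {N : E | N ∈ T j ∧ ν j N ≤ 1} := by
        constructor
        · exact Submodule.smul_mem _ _ hN
        · rw [hν_smul, abs_of_pos (inv_pos.mpr h0), inv_mul_cancel₀ (ne_of_gt h0)]
      have := (hμ_def i j hij).2 ⟨_, hmem, rfl⟩
      simp only [hν_smul, abs_of_pos (inv_pos.mpr h0)] at this
      calc ν i N = ((ν j N)⁻¹ * ν i N) * ν j N := by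
            field_simp
        _ ≤ μ i j * ν j N := by
            exact mul_le_mul_of_nonneg_right this (le_of_lt h0)
  -- main claim: any family summing to zero is zero
  have claim : ∀ g : Fin L → E, (∀ j, g j ∈ T j) → (∑ j, g j) = 0 → ∀ j, g j = 0 := by
    intro g hg hsum
    by_contra hcon
    push_neg at hcon
    obtain ⟨k, hk⟩ := hcon
    set a : Fin L → ℝ := fun j => ν j (g j) / lam j with ha
    obtain ⟨i0, -, hi0⟩ := Finset.exists_max_image Finset.univ a ⟨k, Finset.mem_univ k⟩
    have hak : 0 < a k := by
      apply div_pos _ (hlam k)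
      rcases eq_or_lt_of_le (hν_nonneg k (g k)) with h0 | h0
      · exact absurd (hν_def k (g k) h0.symm) hk
      · exact h0
    have hai0 : 0 < a i0 := lt_of_lt_of_le hak (hi0 k (Finset.mem_univ k))
    -- g i0 = - (sum over others)
    have hsum' : g i0 + ∑ j ∈ Finset.univ.erase i0, g j = 0 := by
      rw [Finset.add_sum_erase _ _ (Finset.mem_univ i0)]; exact hsum
    have hgi0 : g i0 = -(∑ j ∈ Finset.univ.erase i0, g j) := by
      exact eq_neg_of_add_eq_zero_left hsum'
    have h1 : ν i0 (g i0) ≤ ∑ j ∈ Finset.univ.erase i0, ν i0 (g j) := by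
      rw [hgi0, hνneg]
      exact Finset.le_sum_of_subadditive (ν i0) (hν0 i0).le (hν_add i0) _ _
    have h2 : ∀ j ∈ Finset.univ.erase i0, ν i0 (g j) ≤ μ i0 j * (lam j * a i0) := by
      intro j hj
      have hji : i0 ≠ j := (Finset.mem_erase.mp hj).1.symm
      calc ν i0 (g j) ≤ μ i0 j * ν j (g j) := hcoh i0 j hji (g j) (hg j)
        _ = μ i0 j * (lam j * a j) := by
            rw [ha]; field_simp [ne_of_gt (hlam j)]
        _ ≤ μ i0 j * (lam j * a i0) := by
            apply mul_le_mul_of_nonneg_left _ (hμ_nonneg i0 j hji)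
            exact mul_le_mul_of_nonneg_left (hi0 j (Finset.mem_univ j)) (le_of_lt (hlam j))
    have h3 : ν i0 (g i0) ≤ ∑ j ∈ Finset.univ.erase i0, μ i0 j * (lam j * a i0) :=
      le_trans h1 (Finset.sum_le_sum h2)
    have h4 : (∑ j ∈ Finset.univ.erase i0, μ i0 j * (lam j * a i0))
        = (∑ j ∈ Finset.univ.erase i0, μ i0 j * lam j / lam i0) * (lam i0 * a i0) := by
      rw [Finset.sum_mul]
      apply Finset.sum_congr rfl
      intro j _
      field_simp [ne_of_gt (hlam i0)]
    have h5 : (∑ j ∈ Finset.univ.erase i0, μ i0 j * lam j / lam i0) * (lam i0 * a i0)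
        < 1 * (lam i0 * a i0) := by
      apply mul_lt_mul_of_pos_right (hbal i0)
      exact mul_pos (hlam i0) hai0
    have h6 : ν i0 (g i0) = lam i0 * a i0 := by
      rw [ha]
      exact (mul_div_cancel₀ _ (ne_of_gt (hlam i0))).symm
    rw [h6, h4] at h3
    nlinarith [h3, h5]
  -- finish
  intro i
  rw [eq_bot_iff]
  rintro x hx
  rw [Submodule.mem_inf] at hx
  obtain ⟨hxi, hxs⟩ := hx
  rw [Submodule.mem_iSup_finset_iff_exists_sum] at hxs
  obtain ⟨f, hf⟩ := hxs
  set g : Fin L → E := fun j => if j = i then -x else (if h : j ∈ Finset.univ.erase i then (f j : E) else 0) with hgdef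
  have hgmem : ∀ j, g j ∈ T j := by
    intro j
    by_cases h : j = i
    · simp only [hgdef, h, if_pos rfl]
      exact Submodule.neg_mem _ hxi
    · simp only [hgdef, if_neg h]
      rw [dif_pos (Finset.mem_erase.mpr ⟨h, Finset.mem_univ j⟩)]
      exact (f j).2
  have hgsum : (∑ j, g j) = 0 := by
    rw [← Finset.add_sum_erase _ _ (Finset.mem_univ i)]
    have : ∀ j ∈ Finset.univ.erase i, g j = (f j : E) := by
      intro j hj
      simp only [hgdef, if_neg (Finset.mem_erase.mp hj).1, dif_pos hj]
    rw [Finset.sum_congr rfl this, hf]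
    simp [hgdef]
  have := claim g hgmem hgsum i
  simp only [hgdef, if_pos rfl, neg_eq_zero] at this
  simpa using this
end
end

section
/- The proximal operator of λ‖·‖_* (nuclear norm) at a matrix X with SVD X = U Σ Vᵀ is the singular value soft-thresholding operator: argmin_Z ( (1/2)‖Z − X‖_F² + λ‖Z‖_* ) = U max(Σ − λ, 0) Vᵀ, where the max is applied entrywise to the diagonal of Σ. -/
noncomputable section
open Matrix BigOperators

/-- Squared Frobenius norm. -/
def frobSq {m n : ℕ} (A : Matrix (Fin m) (Fin n) ℝ) : ℝ := ∑ i, ∑ j, (A i j) ^ 2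

-- helpers

lemma frobInner_eq {m n : ℕ} (A B : Matrix (Fin m) (Fin n) ℝ) :
    frobInner A B = ∑ k, ∑ l, A k l * B k l := by
  simp only [frobInner, Matrix.trace, Matrix.diag, Matrix.mul_apply, Matrix.transpose_apply]
  exact Finset.sum_comm

lemma singularValues_nonneg {m n : ℕ} (A : Matrix (Fin m) (Fin n) ℝ) (i : Fin n) :
    0 ≤ singularValues A i := Real.sqrt_nonneg _

lemma dot_self_nonneg {k : ℕ} (x : Fin k → ℝ) : 0 ≤ x ⬝ᵥ x :=
  Finset.sum_nonneg fun i _ => mul_self_nonneg _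

lemma svd_facts {m n : ℕ} (A : Matrix (Fin m) (Fin n) ℝ) :
    ∃ (v : Fin n → Fin n → ℝ) (u : Fin n → Fin m → ℝ),
      (∀ i j, v i ⬝ᵥ v j = if i = j then 1 else 0) ∧
      (∀ k l, (∑ i, v i k * v i l) = if k = l then 1 else 0) ∧
      (∀ i j, i ≠ j → u i ⬝ᵥ u j = 0) ∧
      (∀ i, u i ⬝ᵥ u i ≤ 1) ∧
      (∀ i, A *ᵥ v i = singularValues A i • u i) ∧
      (∀ i, u i ⬝ᵥ (A *ᵥ v i) = singularValues A i) := by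
  have hH : (Aᴴ * A).IsHermitian := Matrix.isHermitian_conjTranspose_mul_self A
  set μ : Fin n → ℝ := hH.eigenvalues with hμ
  have hμ0 : ∀ i, 0 ≤ μ i := fun i => Matrix.eigenvalues_conjTranspose_mul_self_nonneg A i
  set σ : Fin n → ℝ := fun i => Real.sqrt (μ i) with hσ
  have hσval : ∀ i, singularValues A i = σ i := fun i => rfl
  have hσ0 : ∀ i, 0 ≤ σ i := fun i => Real.sqrt_nonneg _
  have hσsq : ∀ i, σ i ^ 2 = μ i := fun i => Real.sq_sqrt (hμ0 i)
  set v : Fin n → Fin n → ℝ := fun i => ⇑(hH.eigenvectorBasis i) with hv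
  have horthv : ∀ i j, v i ⬝ᵥ v j = if i = j then 1 else 0 := by
    have := orthonormal_iff_ite.mp hH.eigenvectorBasis.orthonormal
    intro i j
    have h := this i j
    simpa [hv, PiLp.inner_apply, RCLike.inner_apply, dotProduct, mul_comm] using h
  have hAT : Aᴴ = Aᵀ := Matrix.conjTranspose_eq_transpose_of_trivial A
  have hMv : ∀ i, (Aᵀ * A) *ᵥ v i = μ i • v i := by
    intro i; rw [← hAT]; exact hH.mulVec_eigenvectorBasis i
  have hAvAv : ∀ i j, (A *ᵥ v i) ⬝ᵥ (A *ᵥ v j) = if i = j then μ i else 0 := by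
    intro i j
    have h1 : v i ⬝ᵥ ((Aᵀ * A) *ᵥ v j) = (A *ᵥ v i) ⬝ᵥ (A *ᵥ v j) := by
      rw [← Matrix.mulVec_mulVec, dotProduct_mulVec, Matrix.vecMul_transpose]
    rw [← h1, hMv j, dotProduct_smul, smul_eq_mul, horthv i j]
    by_cases h : i = j <;> simp [h]
  set u : Fin n → Fin m → ℝ := fun i =>
    if σ i = 0 then 0 else (σ i)⁻¹ • (A *ᵥ v i) with hu
  have hAv : ∀ i, A *ᵥ v i = σ i • u i := by
    intro i
    by_cases h : σ i = 0
    · have hμi : μ i = 0 := by rw [← hσsq i, h]; ring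
      have h2 : (A *ᵥ v i) ⬝ᵥ (A *ᵥ v i) = 0 := by rw [hAvAv i i]; simp [hμi]
      have h3 : A *ᵥ v i = 0 := by
        funext k
        have := (Finset.sum_eq_zero_iff_of_nonneg
          (fun j _ => mul_self_nonneg ((A *ᵥ v i) j))).mp h2 k (Finset.mem_univ k)
        exact mul_self_eq_zero.mp this
      simp [hu, h, h3]
    · simp only [hu, if_neg h]
      rw [smul_inv_smul₀ h]
  have horthu : ∀ i j, i ≠ j → u i ⬝ᵥ u j = 0 := by
    intro i j hij
    by_cases hi : σ i = 0
    · simp [hu, hi]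
    by_cases hj : σ j = 0
    · simp [hu, hi, hj]
    simp only [hu, if_neg hi, if_neg hj, smul_dotProduct, dotProduct_smul, smul_eq_mul]
    rw [hAvAv i j, if_neg hij]; ring
  have hudot : ∀ i, u i ⬝ᵥ u i = if σ i = 0 then 0 else 1 := by
    intro i
    by_cases hi : σ i = 0
    · simp [hu, hi]
    · simp only [hu, if_neg hi, smul_dotProduct, dotProduct_smul, smul_eq_mul]
      rw [hAvAv i i, if_pos rfl, ← hσsq i]
      field_simp
  refine ⟨v, u, horthv, ?_, horthu, ?_, ?_, ?_⟩
  · -- completeness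
    intro k l
    have hPmem := (hH.eigenvectorUnitary).2
    have h1 : (hH.eigenvectorUnitary : Matrix (Fin n) (Fin n) ℝ) *
        star (hH.eigenvectorUnitary : Matrix (Fin n) (Fin n) ℝ) = 1 :=
      Matrix.mem_unitaryGroup_iff.mp hPmem
    have h2 := congrArg (fun M => M k l) h1
    simp only [Matrix.mul_apply, Matrix.star_apply, star_trivial,
      Matrix.IsHermitian.eigenvectorUnitary_apply, Matrix.one_apply] at h2
    exact h2
  · intro i; rw [hudot i]; split <;> norm_num
  · intro i; rw [hσval i]; exact hAv i
  · intro i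
    rw [hσval i, hAv i, dotProduct_smul, smul_eq_mul, hudot i]
    by_cases hi : σ i = 0 <;> simp [hi]

lemma recon {m n : ℕ} (A B : Matrix (Fin m) (Fin n) ℝ) (v : Fin n → Fin n → ℝ)
    (hc : ∀ k l, (∑ i, v i k * v i l) = if k = l then 1 else 0) :
    frobInner A B = ∑ i, (A *ᵥ v i) ⬝ᵥ (B *ᵥ v i) := by
  rw [frobInner_eq]
  have step : ∀ k : Fin m, ∑ i, (A *ᵥ v i) k * (B *ᵥ v i) k = ∑ l, A k l * B k l := by
    intro k
    have e1 : ∀ i : Fin n, (A *ᵥ v i) k * (B *ᵥ v i) k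
        = ∑ l, ∑ l', A k l * B k l' * (v i l * v i l') := by
      intro i
      simp only [Matrix.mulVec, dotProduct]
      rw [Finset.sum_mul_sum]
      exact Finset.sum_congr rfl fun l _ => Finset.sum_congr rfl fun l' _ => by ring
    simp only [e1]
    rw [Finset.sum_comm]
    refine Finset.sum_congr rfl fun l _ => ?_
    rw [Finset.sum_comm]
    have h3 : ∀ l' : Fin n, ∑ i, A k l * B k l' * (v i l * v i l')
        = A k l * B k l' * (if l = l' then 1 else 0) := by
      intro l'; rw [← Finset.mul_sum, hc l l']
    simp only [h3, mul_ite, mul_one, mul_zero]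
    simp
  calc ∑ k, ∑ l, A k l * B k l = ∑ k, ∑ i, (A *ᵥ v i) k * (B *ᵥ v i) k :=
        Finset.sum_congr rfl fun k _ => (step k).symm
    _ = ∑ i, ∑ k, (A *ᵥ v i) k * (B *ᵥ v i) k := Finset.sum_comm
    _ = ∑ i, (A *ᵥ v i) ⬝ᵥ (B *ᵥ v i) := rfl

lemma sum_dite_sq_le (N M : ℕ) (a : Fin M → ℝ) :
    ∑ l : Fin N, (if h : (l : ℕ) < M then a ⟨l, h⟩ else 0) ^ 2 ≤ ∑ k : Fin M, a k ^ 2 := by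
  have h1 : ∑ l : Fin N, (if h : (l : ℕ) < M then a ⟨l, h⟩ else 0) ^ 2
      = ∑ j ∈ Finset.range N, (if h : j < M then a ⟨j, h⟩ else 0) ^ 2 :=
    Fin.sum_univ_eq_sum_range (fun j => (if h : j < M then a ⟨j, h⟩ else 0) ^ 2) N
  have h2 : ∑ k : Fin M, a k ^ 2 = ∑ j ∈ Finset.range M, (if h : j < M then a ⟨j, h⟩ else 0) ^ 2 := by
    rw [← Fin.sum_univ_eq_sum_range (fun j => (if h : j < M then a ⟨j, h⟩ else 0) ^ 2) M]
    exact Finset.sum_congr rfl fun k _ => by rw [dif_pos k.isLt]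
  rw [h1, h2]
  set f : ℕ → ℝ := fun j => (if h : j < M then a ⟨j, h⟩ else 0) ^ 2 with hf
  have hnn : ∀ j, 0 ≤ f j := fun j => sq_nonneg _
  have hz : ∀ j, ¬ j < M → f j = 0 := by intro j hj; simp [hf, hj]
  calc ∑ j ∈ Finset.range N, f j
      = ∑ j ∈ (Finset.range N ∩ Finset.range M), f j := by
        refine (Finset.sum_subset Finset.inter_subset_left ?_).symm
        intro j hj hj2
        simp only [Finset.mem_inter, Finset.mem_range] at hj hj2
        exact hz j (fun h => hj2 ⟨hj, h⟩)
    _ ≤ ∑ j ∈ Finset.range M, f j := by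
        refine Finset.sum_le_sum_of_subset_of_nonneg Finset.inter_subset_right ?_
        exact fun j _ _ => hnn j

lemma diag_dot {m n : ℕ} (G : Matrix (Fin m) (Fin n) ℝ)
    (hG : ∀ (i : Fin m) (j : Fin n), (i : ℕ) ≠ (j : ℕ) → G i j = 0)
    (a : Fin m → ℝ) (b : Fin n → ℝ) :
    a ⬝ᵥ (G *ᵥ b) = ∑ l : Fin n,
      (if h : (l : ℕ) < m then a ⟨l, h⟩ * G ⟨l, h⟩ l else 0) * b l := by
  have e1 : a ⬝ᵥ (G *ᵥ b) = ∑ k, ∑ l, a k * (G k l * b l) := by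
    simp only [dotProduct, Matrix.mulVec]
    exact Finset.sum_congr rfl fun k _ => Finset.mul_sum _ _ _
  rw [e1, Finset.sum_comm]
  refine Finset.sum_congr rfl fun l _ => ?_
  by_cases h : (l : ℕ) < m
  · rw [dif_pos h]
    rw [Finset.sum_eq_single (⟨(l : ℕ), h⟩ : Fin m)]
    · ring
    · intro k _ hk
      have : (k : ℕ) ≠ (l : ℕ) := fun hc => hk (Fin.ext hc)
      rw [hG k l this]; ring
    · intro hk; exact absurd (Finset.mem_univ _) hk
  · rw [dif_neg h]
    rw [Finset.sum_eq_zero, zero_mul]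
    intro k _
    have : (k : ℕ) ≠ (l : ℕ) := by
      intro hc; apply h; have := k.isLt; omega
    rw [hG k l this]; ring

lemma abs_sum_mul_le_one {n : ℕ} (a b : Fin n → ℝ)
    (ha : ∑ i, a i ^ 2 ≤ 1) (hb : ∑ i, b i ^ 2 ≤ 1) :
    |∑ i, a i * b i| ≤ 1 := by
  have h := Finset.sum_mul_sq_le_sq_mul_sq Finset.univ a b
  have h2 : (∑ i, a i * b i) ^ 2 ≤ 1 := by
    calc (∑ i, a i * b i) ^ 2 ≤ (∑ i, a i ^ 2) * ∑ i, b i ^ 2 := h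
      _ ≤ 1 := by
          have h0 : 0 ≤ ∑ i, a i ^ 2 := Finset.sum_nonneg fun i _ => sq_nonneg _
          have h0' : 0 ≤ ∑ i, b i ^ 2 := Finset.sum_nonneg fun i _ => sq_nonneg _
          nlinarith
  nlinarith [sq_abs (∑ i, a i * b i), abs_nonneg (∑ i, a i * b i)]

lemma bessel {N K : ℕ} (f : Fin N → Fin K → ℝ)
    (horth : ∀ i j, i ≠ j → f i ⬝ᵥ f j = 0)
    (hnorm : ∀ i, f i ⬝ᵥ f i ≤ 1) (w : Fin K → ℝ) :
    ∑ i, (f i ⬝ᵥ w) ^ 2 ≤ w ⬝ᵥ w := by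
  set c : Fin N → ℝ := fun i => f i ⬝ᵥ w with hc
  set r : Fin K → ℝ := w - ∑ i, c i • f i with hr
  have hfnn : ∀ i, 0 ≤ f i ⬝ᵥ f i := fun i => dot_self_nonneg _
  have hdot : ∀ x : Fin K → ℝ, (∑ i, c i • f i) ⬝ᵥ x = ∑ i, c i * (f i ⬝ᵥ x) := by
    intro x
    simp only [dotProduct, Finset.sum_apply, Pi.smul_apply, smul_eq_mul, Finset.sum_mul]
    rw [Finset.sum_comm]
    exact Finset.sum_congr rfl fun i _ => by
      rw [Finset.mul_sum]
      exact Finset.sum_congr rfl fun k _ => by ring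
  have hdot' : ∀ x : Fin K → ℝ, x ⬝ᵥ (∑ i, c i • f i) = ∑ i, c i * (x ⬝ᵥ f i) := by
    intro x
    simp only [dotProduct, Finset.sum_apply, Pi.smul_apply, smul_eq_mul, Finset.mul_sum]
    rw [Finset.sum_comm]
    exact Finset.sum_congr rfl fun i _ => Finset.sum_congr rfl fun k _ => by ring
  have hrr : r ⬝ᵥ r = w ⬝ᵥ w - 2 * ∑ i, c i ^ 2 + ∑ i, c i ^ 2 * (f i ⬝ᵥ f i) := by
    rw [hr, sub_dotProduct, dotProduct_sub, dotProduct_sub, hdot, hdot']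
    have e1 : ∑ i, c i * (w ⬝ᵥ f i) = ∑ i, c i ^ 2 := by
      refine Finset.sum_congr rfl fun i _ => ?_
      rw [dotProduct_comm]; rw [hc]; ring
    have e2 : ∑ i, c i * (f i ⬝ᵥ w) = ∑ i, c i ^ 2 := by
      refine Finset.sum_congr rfl fun i _ => ?_
      rw [hc]; ring
    have e3 : (∑ i, c i • f i) ⬝ᵥ (∑ j, c j • f j) = ∑ i, c i ^ 2 * (f i ⬝ᵥ f i) := by
      rw [hdot]
      refine Finset.sum_congr rfl fun i _ => ?_
      rw [hdot']
      rw [Finset.sum_eq_single i]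
      · rw [dotProduct_comm]; ring
      · intro j _ hj
        rw [horth i j (fun hij => hj hij.symm)]; ring
      · intro hi; exact absurd (Finset.mem_univ _) hi
    rw [e1, e2, e3]; ring
  have h0 : 0 ≤ r ⬝ᵥ r := dot_self_nonneg _
  have hle : ∑ i, c i ^ 2 * (f i ⬝ᵥ f i) ≤ ∑ i, c i ^ 2 := by
    refine Finset.sum_le_sum fun i _ => ?_
    nlinarith [sq_nonneg (c i), hnorm i, hfnn i]
  have : ∑ i, c i ^ 2 ≤ w ⬝ᵥ w := by nlinarith
  simpa [hc] using this

lemma dot_mulVec_left {p q : ℕ} (M : Matrix (Fin p) (Fin q) ℝ) (x : Fin p → ℝ) (y : Fin q → ℝ) :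
    (Mᵀ *ᵥ x) ⬝ᵥ y = x ⬝ᵥ (M *ᵥ y) := by
  rw [Matrix.mulVec_transpose, ← dotProduct_mulVec]

lemma key_ineq {m n : ℕ} (A : Matrix (Fin m) (Fin n) ℝ)
    (U : Matrix (Fin m) (Fin m) ℝ) (V : Matrix (Fin n) (Fin n) ℝ)
    (G : Matrix (Fin m) (Fin n) ℝ) (c : ℝ) (hc : 0 ≤ c)
    (hU : Uᵀ * U = 1) (hV : Vᵀ * V = 1)
    (hGdiag : ∀ (i : Fin m) (j : Fin n), (i : ℕ) ≠ (j : ℕ) → G i j = 0)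
    (hGb : ∀ (i : Fin m) (j : Fin n), |G i j| ≤ c) :
    frobInner A (U * G * Vᵀ) ≤ c * nuclearNorm A := by
  obtain ⟨v, u, horthv, hcomp, horthu, hunorm, hAv, huAv⟩ := svd_facts A
  have hUU : U * Uᵀ = 1 := mul_eq_one_comm.mp hU
  have hVV : V * Vᵀ = 1 := mul_eq_one_comm.mp hV
  rw [recon A _ v hcomp]
  have hbound : ∀ i, (A *ᵥ v i) ⬝ᵥ ((U * G * Vᵀ) *ᵥ v i) ≤ singularValues A i * c := by
    intro i
    have hW : (U * G * Vᵀ) *ᵥ v i = U *ᵥ (G *ᵥ (Vᵀ *ᵥ v i)) := by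
      rw [← Matrix.mulVec_mulVec, ← Matrix.mulVec_mulVec]
    have hstep : u i ⬝ᵥ ((U * G * Vᵀ) *ᵥ v i) = (Uᵀ *ᵥ u i) ⬝ᵥ (G *ᵥ (Vᵀ *ᵥ v i)) := by
      rw [hW, ← dot_mulVec_left U (u i) (G *ᵥ (Vᵀ *ᵥ v i))]
    have haa : (Uᵀ *ᵥ u i) ⬝ᵥ (Uᵀ *ᵥ u i) ≤ 1 := by
      have e : (Uᵀ *ᵥ u i) ⬝ᵥ (Uᵀ *ᵥ u i) = u i ⬝ᵥ u i := by
        rw [dot_mulVec_left U (u i) (Uᵀ *ᵥ u i), Matrix.mulVec_mulVec, hUU, Matrix.one_mulVec]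
      rw [e]; exact hunorm i
    have hbb : (Vᵀ *ᵥ v i) ⬝ᵥ (Vᵀ *ᵥ v i) ≤ 1 := by
      have e : (Vᵀ *ᵥ v i) ⬝ᵥ (Vᵀ *ᵥ v i) = v i ⬝ᵥ v i := by
        rw [dot_mulVec_left V (v i) (Vᵀ *ᵥ v i), Matrix.mulVec_mulVec, hVV, Matrix.one_mulVec]
      rw [e, horthv i i, if_pos rfl]
    set a : Fin m → ℝ := Uᵀ *ᵥ u i with ha
    set b : Fin n → ℝ := Vᵀ *ᵥ v i with hb
    have habs : a ⬝ᵥ (G *ᵥ b) ≤ c := by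
      rw [diag_dot G hGdiag a b]
      have hterm : ∀ l : Fin n, (if h : (l : ℕ) < m then a ⟨l, h⟩ * G ⟨l, h⟩ l else 0) * b l
          ≤ c * ((if h : (l : ℕ) < m then |a ⟨l, h⟩| else 0) * |b l|) := by
        intro l
        by_cases h : (l : ℕ) < m
        · rw [dif_pos h, dif_pos h]
          calc a ⟨l, h⟩ * G ⟨l, h⟩ l * b l ≤ |a ⟨l, h⟩| * |G ⟨l, h⟩ l| * |b l| := by
                rw [← abs_mul, ← abs_mul]; exact le_abs_self _
            _ = |G ⟨l, h⟩ l| * (|a ⟨l, h⟩| * |b l|) := by ring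
            _ ≤ c * (|a ⟨l, h⟩| * |b l|) :=
                mul_le_mul_of_nonneg_right (hGb _ _)
                  (mul_nonneg (abs_nonneg _) (abs_nonneg _))
        · rw [dif_neg h, dif_neg h]; simp
      calc (∑ l : Fin n, (if h : (l : ℕ) < m then a ⟨l, h⟩ * G ⟨l, h⟩ l else 0) * b l)
          ≤ (∑ l : Fin n, c * ((if h : (l : ℕ) < m then |a ⟨l, h⟩| else 0) * |b l|)) :=
            Finset.sum_le_sum fun l _ => hterm l
        _ = c * (∑ l : Fin n, (if h : (l : ℕ) < m then |a ⟨l, h⟩| else 0) * |b l|) := by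
            rw [Finset.mul_sum]
        _ ≤ c * 1 := by
            refine mul_le_mul_of_nonneg_left ?_ hc
            have hA2 : ∑ l : Fin n, (if h : (l : ℕ) < m then |a ⟨l, h⟩| else 0) ^ 2 ≤ 1 := by
              have h1 := sum_dite_sq_le n m (fun k => |a k|)
              have e2 : ∑ k : Fin m, |a k| ^ 2 = a ⬝ᵥ a := by
                simp only [sq_abs]; simp [dotProduct, pow_two]
              calc (∑ l : Fin n, (if h : (l : ℕ) < m then |a ⟨l, h⟩| else 0) ^ 2)
                  ≤ (∑ k : Fin m, |a k| ^ 2) := h1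
                _ = a ⬝ᵥ a := e2
                _ ≤ 1 := haa
            have hB2 : ∑ l : Fin n, |b l| ^ 2 ≤ 1 := by
              have e2 : ∑ l : Fin n, |b l| ^ 2 = b ⬝ᵥ b := by
                simp only [sq_abs]; simp [dotProduct, pow_two]
              rw [e2]; exact hbb
            exact (abs_le.mp (abs_sum_mul_le_one _ _ hA2 hB2)).2
        _ = c := mul_one c
    rw [hAv i, smul_dotProduct, smul_eq_mul, hstep]
    exact mul_le_mul_of_nonneg_left habs (singularValues_nonneg A i)
  calc (∑ i, (A *ᵥ v i) ⬝ᵥ ((U * G * Vᵀ) *ᵥ v i)) ≤ (∑ i, singularValues A i * c) :=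
        Finset.sum_le_sum fun i _ => hbound i
    _ = c * nuclearNorm A := by
        unfold nuclearNorm
        rw [Finset.mul_sum]
        exact Finset.sum_congr rfl fun i _ => mul_comm _ _

lemma frobInner_conj {m n : ℕ} (U : Matrix (Fin m) (Fin m) ℝ) (V : Matrix (Fin n) (Fin n) ℝ)
    (hU : Uᵀ * U = 1) (hV : Vᵀ * V = 1) (A B : Matrix (Fin m) (Fin n) ℝ) :
    frobInner (U * A * Vᵀ) (U * B * Vᵀ) = frobInner A B := by
  unfold frobInner
  have e : (U * A * Vᵀ)ᵀ * (U * B * Vᵀ) = V * (Aᵀ * B) * Vᵀ := by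
    simp only [Matrix.transpose_mul, Matrix.transpose_transpose, Matrix.mul_assoc]
    rw [show Uᵀ * (U * (B * Vᵀ)) = B * Vᵀ by rw [← Matrix.mul_assoc, hU, Matrix.one_mul]]
  rw [e, Matrix.trace_mul_cycle, ← Matrix.mul_assoc, hV, Matrix.one_mul]

lemma nuclearNorm_le_sum {m n : ℕ}
    (U : Matrix (Fin m) (Fin m) ℝ) (V : Matrix (Fin n) (Fin n) ℝ)
    (G : Matrix (Fin m) (Fin n) ℝ)
    (hU : Uᵀ * U = 1) (hV : Vᵀ * V = 1)
    (hGdiag : ∀ (i : Fin m) (j : Fin n), (i : ℕ) ≠ (j : ℕ) → G i j = 0)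
    (hGnn : ∀ (i : Fin m) (j : Fin n), 0 ≤ G i j) :
    nuclearNorm (U * G * Vᵀ) ≤ ∑ i, ∑ j, G i j := by
  set A : Matrix (Fin m) (Fin n) ℝ := U * G * Vᵀ with hA
  obtain ⟨v, u, horthv, hcomp, horthu, hunorm, hAv, huAv⟩ := svd_facts A
  have hUU : U * Uᵀ = 1 := mul_eq_one_comm.mp hU
  have hVV : V * Vᵀ = 1 := mul_eq_one_comm.mp hV
  have e1 : nuclearNorm A = ∑ i, u i ⬝ᵥ (A *ᵥ v i) := by
    unfold nuclearNorm
    exact Finset.sum_congr rfl fun i _ => (huAv i).symm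
  have hstep : ∀ i, u i ⬝ᵥ (A *ᵥ v i) = (Uᵀ *ᵥ u i) ⬝ᵥ (G *ᵥ (Vᵀ *ᵥ v i)) := by
    intro i
    rw [hA, show (U * G * Vᵀ) *ᵥ v i = U *ᵥ (G *ᵥ (Vᵀ *ᵥ v i)) by
      rw [← Matrix.mulVec_mulVec, ← Matrix.mulVec_mulVec],
      ← dot_mulVec_left U (u i) (G *ᵥ (Vᵀ *ᵥ v i))]
  have e2 : nuclearNorm A = ∑ l : Fin n, ∑ i : Fin n,
      (if h : (l : ℕ) < m then (Uᵀ *ᵥ u i) ⟨l, h⟩ * G ⟨l, h⟩ l else 0) * (Vᵀ *ᵥ v i) l := by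
    rw [e1, Finset.sum_congr rfl fun i _ => by rw [hstep i, diag_dot G hGdiag]]
    exact Finset.sum_comm
  rw [e2]
  have hcol : ∀ l : Fin n, ∑ i : Fin n,
      (if h : (l : ℕ) < m then (Uᵀ *ᵥ u i) ⟨l, h⟩ * G ⟨l, h⟩ l else 0) * (Vᵀ *ᵥ v i) l
      ≤ (if h : (l : ℕ) < m then G ⟨l, h⟩ l else 0) := by
    intro l
    by_cases h : (l : ℕ) < m
    · simp only [dif_pos h]
      have e3 : ∑ i : Fin n, (Uᵀ *ᵥ u i) ⟨l, h⟩ * G ⟨l, h⟩ l * (Vᵀ *ᵥ v i) l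
          = G ⟨l, h⟩ l * ∑ i : Fin n, (Uᵀ *ᵥ u i) ⟨l, h⟩ * (Vᵀ *ᵥ v i) l := by
        rw [Finset.mul_sum]
        exact Finset.sum_congr rfl fun i _ => by ring
      rw [e3]
      have hbound : ∑ i : Fin n, (Uᵀ *ᵥ u i) ⟨l, h⟩ * (Vᵀ *ᵥ v i) l ≤ 1 := by
        have hA2 : ∑ i : Fin n, ((Uᵀ *ᵥ u i) ⟨l, h⟩) ^ 2 ≤ 1 := by
          have hw : ∀ i : Fin n, (Uᵀ *ᵥ u i) ⟨l, h⟩ = u i ⬝ᵥ (fun j => U j ⟨l, h⟩) := by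
            intro i
            simp only [Matrix.mulVec, dotProduct, Matrix.transpose_apply]
            exact Finset.sum_congr rfl fun j _ => mul_comm _ _
          have hww : (fun j => U j ⟨l, h⟩) ⬝ᵥ (fun j => U j ⟨l, h⟩) = 1 := by
            have := congrArg (fun M => M ⟨l, h⟩ ⟨l, h⟩) hU
            simp only [Matrix.mul_apply, Matrix.transpose_apply, Matrix.one_apply_eq] at this
            simpa [dotProduct] using this
          calc (∑ i : Fin n, ((Uᵀ *ᵥ u i) ⟨l, h⟩) ^ 2)
              = ∑ i : Fin n, (u i ⬝ᵥ (fun j => U j ⟨l, h⟩)) ^ 2 :=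
                Finset.sum_congr rfl fun i _ => by rw [hw i]
            _ ≤ (fun j => U j ⟨l, h⟩) ⬝ᵥ (fun j => U j ⟨l, h⟩) :=
                bessel u horthu hunorm _
            _ = 1 := hww
        have hB2 : ∑ i : Fin n, ((Vᵀ *ᵥ v i) l) ^ 2 ≤ 1 := by
          have hw : ∀ i : Fin n, (Vᵀ *ᵥ v i) l = v i ⬝ᵥ (fun j => V j l) := by
            intro i
            simp only [Matrix.mulVec, dotProduct, Matrix.transpose_apply]
            exact Finset.sum_congr rfl fun j _ => mul_comm _ _
          have hww : (fun j => V j l) ⬝ᵥ (fun j => V j l) = 1 := by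
            have := congrArg (fun M => M l l) hV
            simp only [Matrix.mul_apply, Matrix.transpose_apply, Matrix.one_apply_eq] at this
            simpa [dotProduct] using this
          have horthv' : ∀ i j, i ≠ j → v i ⬝ᵥ v j = 0 := by
            intro i j hij; rw [horthv i j, if_neg hij]
          have hvnorm : ∀ i, v i ⬝ᵥ v i ≤ 1 := by
            intro i; rw [horthv i i, if_pos rfl]
          calc (∑ i : Fin n, ((Vᵀ *ᵥ v i) l) ^ 2)
              = ∑ i : Fin n, (v i ⬝ᵥ (fun j => V j l)) ^ 2 :=
                Finset.sum_congr rfl fun i _ => by rw [hw i]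
            _ ≤ (fun j => V j l) ⬝ᵥ (fun j => V j l) := bessel v horthv' hvnorm _
            _ = 1 := hww
        exact (abs_le.mp (abs_sum_mul_le_one _ _
          (by simpa [sq_abs] using hA2) (by simpa [sq_abs] using hB2))).2
      have hGpos : 0 ≤ G ⟨l, h⟩ l := hGnn _ _
      nlinarith
    · simp only [dif_neg h]
      simp
  calc (∑ l : Fin n, ∑ i : Fin n,
        (if h : (l : ℕ) < m then (Uᵀ *ᵥ u i) ⟨l, h⟩ * G ⟨l, h⟩ l else 0) * (Vᵀ *ᵥ v i) l)
      ≤ (∑ l : Fin n, (if h : (l : ℕ) < m then G ⟨l, h⟩ l else 0)) :=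
        Finset.sum_le_sum fun l _ => hcol l
    _ ≤ ∑ i, ∑ j, G i j := by
        rw [show (∑ i, ∑ j, G i j) = ∑ j, ∑ i, G i j from Finset.sum_comm]
        refine Finset.sum_le_sum fun l _ => ?_
        by_cases h : (l : ℕ) < m
        · rw [dif_pos h]
          exact Finset.single_le_sum (fun i _ => hGnn i l) (Finset.mem_univ (⟨l, h⟩ : Fin m))
        · rw [dif_neg h]
          exact Finset.sum_nonneg fun i _ => hGnn i l

lemma sum_le_nuclearNorm {m n : ℕ}
    (U : Matrix (Fin m) (Fin m) ℝ) (V : Matrix (Fin n) (Fin n) ℝ)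
    (G : Matrix (Fin m) (Fin n) ℝ)
    (hU : Uᵀ * U = 1) (hV : Vᵀ * V = 1)
    (hGdiag : ∀ (i : Fin m) (j : Fin n), (i : ℕ) ≠ (j : ℕ) → G i j = 0)
    (hGnn : ∀ (i : Fin m) (j : Fin n), 0 ≤ G i j) :
    (∑ i, ∑ j, G i j) ≤ nuclearNorm (U * G * Vᵀ) := by
  set J : Matrix (Fin m) (Fin n) ℝ := Matrix.of (fun i j => if (i : ℕ) = (j : ℕ) then (1 : ℝ) else 0)
    with hJ
  have hJdiag : ∀ (i : Fin m) (j : Fin n), (i : ℕ) ≠ (j : ℕ) → J i j = 0 := by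
    intro i j hij; simp [hJ, hij]
  have hJb : ∀ (i : Fin m) (j : Fin n), |J i j| ≤ 1 := by
    intro i j
    by_cases h : (i : ℕ) = (j : ℕ) <;> simp [hJ, h]
  have h := key_ineq (U * G * Vᵀ) U V J 1 zero_le_one hU hV hJdiag hJb
  rw [one_mul, frobInner_conj U V hU hV, frobInner_eq] at h
  calc (∑ i, ∑ j, G i j) = ∑ i, ∑ j, G i j * J i j := by
        refine Finset.sum_congr rfl fun i _ => Finset.sum_congr rfl fun j _ => ?_
        by_cases h2 : (i : ℕ) = (j : ℕ)
        · simp [hJ, h2]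
        · rw [hGdiag i j h2]; ring
    _ ≤ nuclearNorm (U * G * Vᵀ) := h

lemma frobInner_sub_left {m n : ℕ} (A B C : Matrix (Fin m) (Fin n) ℝ) :
    frobInner (A - B) C = frobInner A C - frobInner B C := by
  unfold frobInner; rw [Matrix.transpose_sub, Matrix.sub_mul, Matrix.trace_sub]

lemma frobInner_neg_right {m n : ℕ} (A B : Matrix (Fin m) (Fin n) ℝ) :
    frobInner A (-B) = - frobInner A B := by
  unfold frobInner; rw [Matrix.mul_neg, Matrix.trace_neg]

lemma quad_id {m n : ℕ} (Z Zs X : Matrix (Fin m) (Fin n) ℝ) :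
    frobSq (Z - X) = frobSq (Zs - X) + frobSq (Z - Zs) + 2 * frobInner (Z - Zs) (Zs - X) := by
  simp only [frobSq, frobInner_eq, Matrix.sub_apply, Finset.mul_sum]
  rw [← Finset.sum_add_distrib, ← Finset.sum_add_distrib]
  refine Finset.sum_congr rfl fun k _ => ?_
  rw [← Finset.sum_add_distrib, ← Finset.sum_add_distrib]
  exact Finset.sum_congr rfl fun l _ => by ring

lemma frobSq_pos {m n : ℕ} {Z Zs : Matrix (Fin m) (Fin n) ℝ} (h : Z ≠ Zs) :
    0 < frobSq (Z - Zs) := by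
  have hex : ∃ k l, Z k l ≠ Zs k l := by
    by_contra hcon
    push_neg at hcon
    exact h (by ext k l; exact hcon k l)
  obtain ⟨k0, l0, hkl⟩ := hex
  unfold frobSq
  refine Finset.sum_pos' (fun k _ => Finset.sum_nonneg fun l _ => sq_nonneg _)
    ⟨k0, Finset.mem_univ _, Finset.sum_pos' (fun l _ => sq_nonneg _)
      ⟨l0, Finset.mem_univ _, ?_⟩⟩
  have : (Z - Zs) k0 l0 ≠ 0 := by
    rw [Matrix.sub_apply]; exact sub_ne_zero.mpr hkl
  exact pow_two_pos_of_ne_zero this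

/-- The proximal operator of `λ‖·‖_*` at `X` with full SVD
`X = U Σ Vᵀ` is singular value soft-thresholding: the unique minimizer of
`(1/2)‖Z − X‖_F² + λ‖Z‖_*` is `U max(Σ − λ, 0) Vᵀ`. -/
theorem prox_nuclearNorm_eq_svt
    {m n : ℕ} (X : Matrix (Fin m) (Fin n) ℝ) (lam : ℝ) (hlam : 0 < lam)
    (U : Matrix (Fin m) (Fin m) ℝ) (Sd : Matrix (Fin m) (Fin n) ℝ)
    (V : Matrix (Fin n) (Fin n) ℝ)
    (hU : Uᵀ * U = 1) (hV : Vᵀ * V = 1)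
    (hSdiag : ∀ (i : Fin m) (j : Fin n), (i : ℕ) ≠ (j : ℕ) → Sd i j = 0)
    (hSnonneg : ∀ (i : Fin m) (j : Fin n), 0 ≤ Sd i j)
    (hX : X = U * Sd * Vᵀ) :
    ∀ Z : Matrix (Fin m) (Fin n) ℝ,
      Z ≠ U * (Matrix.of fun i j => max (Sd i j - lam) 0) * Vᵀ →
      (1 / 2) * frobSq (U * (Matrix.of fun i j => max (Sd i j - lam) 0) * Vᵀ - X)
          + lam * nuclearNorm (U * (Matrix.of fun i j => max (Sd i j - lam) 0) * Vᵀ)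
        < (1 / 2) * frobSq (Z - X) + lam * nuclearNorm Z := by
  intro Z hZ
  set D' : Matrix (Fin m) (Fin n) ℝ := Matrix.of fun i j => max (Sd i j - lam) 0 with hD'
  set Zs : Matrix (Fin m) (Fin n) ℝ := U * D' * Vᵀ with hZs
  have hD'app : ∀ (i : Fin m) (j : Fin n), D' i j = max (Sd i j - lam) 0 := fun i j => rfl
  have hD'diag : ∀ (i : Fin m) (j : Fin n), (i : ℕ) ≠ (j : ℕ) → D' i j = 0 := by
    intro i j hij
    rw [hD'app i j, hSdiag i j hij, zero_sub]
    exact max_eq_right (by linarith)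
  have hD'nn : ∀ (i : Fin m) (j : Fin n), 0 ≤ D' i j := fun i j => le_max_right _ _
  have hnnZs : nuclearNorm Zs = ∑ i, ∑ j, D' i j :=
    le_antisymm (nuclearNorm_le_sum U V D' hU hV hD'diag hD'nn)
      (sum_le_nuclearNorm U V D' hU hV hD'diag hD'nn)
  have hGdiag : ∀ (i : Fin m) (j : Fin n), (i : ℕ) ≠ (j : ℕ) → (Sd - D') i j = 0 := by
    intro i j hij
    rw [Matrix.sub_apply, hSdiag i j hij, hD'diag i j hij]; ring
  have hGb : ∀ (i : Fin m) (j : Fin n), |(Sd - D') i j| ≤ lam := by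
    intro i j
    rw [Matrix.sub_apply, hD'app i j]
    rcases le_total (Sd i j) lam with h | h
    · rw [max_eq_right (by linarith), sub_zero, abs_of_nonneg (hSnonneg i j)]
      exact h
    · rw [show Sd i j - max (Sd i j - lam) 0 = lam by
        rw [max_eq_left (by linarith)]; ring]
      rw [abs_of_nonneg hlam.le]
  have hXZs : X - Zs = U * (Sd - D') * Vᵀ := by
    rw [hX, hZs, Matrix.mul_sub, Matrix.sub_mul]
  have hinner1 : frobInner Zs (X - Zs) = lam * ∑ i, ∑ j, D' i j := by
    rw [hXZs, hZs, frobInner_conj U V hU hV, frobInner_eq, Finset.mul_sum]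
    refine Finset.sum_congr rfl fun i _ => ?_
    rw [Finset.mul_sum]
    refine Finset.sum_congr rfl fun j _ => ?_
    rw [Matrix.sub_apply, hD'app i j]
    rcases le_total (Sd i j) lam with h | h
    · rw [max_eq_right (by linarith)]; ring
    · rw [max_eq_left (by linarith)]; ring
  have hinner2 : frobInner Z (X - Zs) ≤ lam * nuclearNorm Z := by
    rw [hXZs]; exact key_ineq Z U V (Sd - D') lam hlam.le hU hV hGdiag hGb
  have hquad := quad_id Z Zs X
  have hlin1 := frobInner_sub_left Z Zs (Zs - X)
  have hlin2 : frobInner Z (Zs - X) = - frobInner Z (X - Zs) := by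
    rw [show Zs - X = -(X - Zs) from (neg_sub X Zs).symm, frobInner_neg_right]
  have hlin3 : frobInner Zs (Zs - X) = - frobInner Zs (X - Zs) := by
    rw [show Zs - X = -(X - Zs) from (neg_sub X Zs).symm, frobInner_neg_right]
  have hpos := frobSq_pos hZ
  rw [← hnnZs] at hinner1
  linarith [hquad, hlin1, hlin2, hlin3, hinner1, hinner2, hpos]
end
end
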